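/- Accelerated proximal gradient O(1/k²) rate: With φ convex differentiable with L-Lipschitz gradient, ψ proper closed convex, f = φ+ψ with minimizer set X̄ ≠ ∅ and minimum f̄, the FISTA iteration x_{k+1} = Prox_{1/L}(y_k − (1/L)∇φ(y_k)), y_{k+1} = x_{k+1} + (θ_{k+1}(1−θ_k)/θ_k)(x_{k+1} − x_k) with θ₀ = 1, θ_{k+1}² = θ_k²(1−θ_{k+1}), y₀ = x₀, satisfies f(x_k) − f̄ ≤ 2L·dist(x₀, X̄)²/(k+1)² for all k ≥ 1. -/

import Mathlib

open scoped RealInnerProductSpace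

variable {E : Type*} [NormedAddCommGroup E] [InnerProductSpace ℝ E] [FiniteDimensional ℝ E]

/-- Convex conjugate of an extended-real-valued function. -/
noncomputable def conjFn (f : E → EReal) (z : E) : EReal :=
  ⨆ x : E, (((⟪z, x⟫ : ℝ) : EReal) - f x)

/-- Subdifferential of an extended-real-valued function. -/
def SubgradAt (f : E → EReal) (x : E) : Set E :=
  {g : E | ∀ y : E, f x + (((⟪g, y - x⟫ : ℝ)) : EReal) ≤ f y}

/-- Subdifferential of a real-valued function. -/
def RSubgradAt (f : E → ℝ) (x : E) : Set E :=
  {g : E | ∀ y : E, f x + ⟪g, y - x⟫ ≤ f y}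

/-- Convexity for extended-real-valued functions. -/
def EConvex (f : E → EReal) : Prop :=
  ∀ x y : E, ∀ a b : ℝ, 0 ≤ a → 0 ≤ b → a + b = 1 →
    f (a • x + b • y) ≤ ((a : ℝ) : EReal) * f x + ((b : ℝ) : EReal) * f y

/-- Properness of an extended-real-valued function. -/
def ProperFn (f : E → EReal) : Prop := (∃ x, f x ≠ ⊤) ∧ ∀ x, f x ≠ ⊥

/-- `p` is the proximal point `Prox_t(v)` of `ψ`, i.e. a minimizer of
`y ↦ ψ(y) + ‖y - v‖²/(2t)`. -/
def IsProxPt (ψ : E → EReal) (t : ℝ) (v p : E) : Prop :=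
  ∀ y : E, ψ p + ((‖p - v‖^2 / (2*t) : ℝ) : EReal) ≤ ψ y + ((‖y - v‖^2 / (2*t) : ℝ) : EReal)

section FistaAux

open Topology Set Filter

set_option linter.unusedSectionVars false in
private lemma fista_path_hasDerivAt (a w : E) (t : ℝ) :
    HasDerivAt (fun s : ℝ => a + s • w) w t := by
  simpa using ((hasDerivAt_id t).smul_const w).const_add a

set_option linter.unusedSectionVars false in
private lemma fista_comp_hasDerivAt (φ : E → ℝ) (φ' : E → E)
    (hφd : ∀ v, HasGradientAt φ (φ' v) v) (a w : E) (t : ℝ) :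
    HasDerivAt (fun s : ℝ => φ (a + s • w)) ⟪φ' (a + t • w), w⟫ t := by
  have h1 := (hφd (a + t • w)).hasFDerivAt.comp_hasDerivAt t (fista_path_hasDerivAt a w t)
  simpa [InnerProductSpace.toDual_apply_apply, Function.comp_def] using h1

set_option linter.unusedSectionVars false in
private lemma fista_grad_convex_le (φ : E → ℝ) (φ' : E → E)
    (hφd : ∀ v, HasGradientAt φ (φ' v) v) (hφc : ConvexOn ℝ Set.univ φ)
    (a z : E) : φ a + ⟪φ' a, z - a⟫ ≤ φ z := by
  have hder := fista_comp_hasDerivAt φ φ' hφd a (z - a) 0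
  simp only [zero_smul, add_zero] at hder
  have htend := hasDerivAt_iff_tendsto_slope.1 hder
  have hev : ∀ᶠ t in 𝓝[>] (0:ℝ), slope (fun s : ℝ => φ (a + s • (z - a))) 0 t ≤ φ z - φ a := by
    filter_upwards [Ioo_mem_nhdsGT_of_mem (by norm_num : (0:ℝ) ∈ Set.Ico 0 1)] with t ht
    have hcvx := hφc.2 (Set.mem_univ a) (Set.mem_univ z)
      (by linarith [ht.1, ht.2] : (0:ℝ) ≤ 1 - t) ht.1.le (by ring)
    have heq : (1 - t) • a + t • z = a + t • (z - a) := by module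
    rw [heq] at hcvx
    rw [slope_def_field]
    simp only [zero_smul, add_zero, sub_zero]
    rw [div_le_iff₀ ht.1]
    simp only [smul_eq_mul] at hcvx
    nlinarith [hcvx]
  have hsub : Set.Ioi (0:ℝ) ⊆ {(0:ℝ)}ᶜ := fun x hx => ne_of_gt hx
  have hle := le_of_tendsto (htend.mono_left (nhdsWithin_mono 0 hsub)) hev
  linarith

set_option linter.unusedSectionVars false in
private lemma fista_descent_lemma (φ : E → ℝ) (φ' : E → E)
    (hφd : ∀ v, HasGradientAt φ (φ' v) v)
    (L : ℝ) (hL : 0 < L) (hlip : ∀ u v : E, ‖φ' u - φ' v‖ ≤ L * ‖u - v‖)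
    (a b : E) : φ b ≤ φ a + ⟪φ' a, b - a⟫ + L / 2 * ‖b - a‖ ^ 2 := by
  have hcφ' : Continuous φ' := by
    have : LipschitzWith (Real.toNNReal L) φ' := by
      apply LipschitzWith.of_dist_le_mul
      intro u v
      rw [dist_eq_norm, dist_eq_norm]
      simpa [Real.coe_toNNReal L hL.le] using hlip u v
    exact this.continuous
  set w := b - a with hw
  have hcont : Continuous fun t : ℝ => ⟪φ' (a + t • w), w⟫ := by
    exact (Continuous.inner (hcφ'.comp (by continuity)) continuous_const)
  have hftc : ∫ t in (0:ℝ)..1, ⟪φ' (a + t • w), w⟫ = φ (a + (1:ℝ) • w) - φ (a + (0:ℝ) • w) := by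
    apply intervalIntegral.integral_eq_sub_of_hasDerivAt (f := fun s : ℝ => φ (a + s • w))
    · intro t _
      exact fista_comp_hasDerivAt φ φ' hφd a w t
    · exact hcont.intervalIntegrable 0 1
  have hbd : ∀ t ∈ Set.Icc (0:ℝ) 1,
      ⟪φ' (a + t • w), w⟫ ≤ ⟪φ' a, w⟫ + t * (L * ‖w‖ ^ 2) := by
    intro t ht
    have h1 : ⟪φ' (a + t • w) - φ' a, w⟫ ≤ ‖φ' (a + t • w) - φ' a‖ * ‖w‖ :=
      real_inner_le_norm _ _
    have h2 : ‖φ' (a + t • w) - φ' a‖ ≤ L * (t * ‖w‖) := by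
      have := hlip (a + t • w) a
      simpa [norm_smul, abs_of_nonneg ht.1] using this
    have h3 : ⟪φ' (a + t • w) - φ' a, w⟫ ≤ L * (t * ‖w‖) * ‖w‖ :=
      h1.trans (by nlinarith [norm_nonneg w])
    rw [inner_sub_left] at h3
    nlinarith [h3]
  have hint : ∫ t in (0:ℝ)..1, ⟪φ' (a + t • w), w⟫ ≤
      ∫ t in (0:ℝ)..1, (⟪φ' a, w⟫ + t * (L * ‖w‖ ^ 2)) := by
    apply intervalIntegral.integral_mono_on (by norm_num)
      (hcont.intervalIntegrable 0 1)
      ((continuous_const.add (continuous_id'.mul continuous_const)).intervalIntegrable 0 1)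
    simpa using hbd
  have hval : ∫ t in (0:ℝ)..1, (⟪φ' a, w⟫ + t * (L * ‖w‖ ^ 2))
      = ⟪φ' a, w⟫ + L / 2 * ‖w‖ ^ 2 := by
    rw [intervalIntegral.integral_add (f := fun _ => ⟪φ' a, w⟫) (g := fun t => t * (L * ‖w‖ ^ 2)) (intervalIntegrable_const)
      ((continuous_id'.mul continuous_const).intervalIntegrable 0 1),
      intervalIntegral.integral_const]
    have h5 : ∫ t in (0:ℝ)..1, t * (L * ‖w‖ ^ 2) = (L * ‖w‖ ^ 2) / 2 := by
      rw [intervalIntegral.integral_mul_const (f := fun t : ℝ => t), integral_id]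
      ring
    rw [h5]; norm_num; ring
  rw [hftc] at hint
  simp only [one_smul, zero_smul, add_zero] at hint
  rw [hval] at hint
  have hab : a + w = b := by rw [hw]; abel
  rw [hab] at hint
  linarith

private lemma fista_le_of_forall_eps (x A C : ℝ) (hC : 0 ≤ C)
    (h : ∀ l : ℝ, 0 < l → l < 1 → x ≤ A + l * C) : x ≤ A := by
  by_contra hx
  push_neg at hx
  rcases eq_or_lt_of_le hC with hC0 | hC0
  · have := h (1/2) (by norm_num) (by norm_num); rw [← hC0] at this; linarith
  · have hl : 0 < min (1/2) ((x - A)/(2*C)) :=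
      lt_min (by norm_num) (div_pos (by linarith) (by linarith))
    have h1 := h _ hl (lt_of_le_of_lt (min_le_left _ _) (by norm_num))
    have h2 : min (1/2) ((x-A)/(2*C)) * C ≤ (x-A)/2 := by
      calc min (1/2) ((x-A)/(2*C)) * C ≤ ((x - A)/(2*C)) * C :=
            mul_le_mul_of_nonneg_right (min_le_right _ _) hC
        _ = (x-A)/2 := by field_simp
    linarith

set_option linter.unusedSectionVars false in
private lemma fista_prox_strong (ψ : E → EReal) (hψc : EConvex ψ) (t : ℝ) (ht : 0 < t)
    (v p : E) (hp : IsProxPt ψ t v p) (hptop : ψ p ≠ ⊤) (hbot : ∀ w, ψ w ≠ ⊥) (z : E) :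
    ψ p + ((‖p - v‖^2 / (2*t) + ‖z - p‖^2 / (2*t) : ℝ) : EReal)
      ≤ ψ z + ((‖z - v‖^2 / (2*t) : ℝ) : EReal) := by
  by_cases hz : ψ z = ⊤
  · rw [hz, EReal.top_add_of_ne_bot (EReal.coe_ne_bot _)]
    exact le_top
  obtain ⟨P, hP⟩ : ∃ P : ℝ, ψ p = (P : ℝ) := ⟨(ψ p).toReal, (EReal.coe_toReal hptop (hbot p)).symm⟩
  obtain ⟨Z, hZ⟩ : ∃ Z : ℝ, ψ z = (Z : ℝ) := ⟨(ψ z).toReal, (EReal.coe_toReal hz (hbot z)).symm⟩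
  rw [hP, hZ, ← EReal.coe_add, ← EReal.coe_add, EReal.coe_le_coe_iff]
  have hexp : ‖z - v‖^2 = ‖z - p‖^2 + 2*⟪z - p, p - v⟫ + ‖p - v‖^2 := by
    have : z - v = (z - p) + (p - v) := by abel
    rw [this, ← real_inner_self_eq_norm_sq, ← real_inner_self_eq_norm_sq,
      ← real_inner_self_eq_norm_sq]
    simp only [inner_add_add_self]
    rw [real_inner_comm (p - v) (z - p)]
    ring
  have hkey : ∀ l : ℝ, 0 < l → l < 1 →
      P - Z ≤ ⟪p - v, z - p⟫ / t + l * (‖z - p‖^2 / (2*t)) := by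
    intro l hl0 hl1
    set m := (1 - l) • p + l • z with hm
    have hcvx := hψc p z (1 - l) l (by linarith) hl0.le (by ring)
    rw [hP, hZ] at hcvx
    have hcvx' : ψ m ≤ (((1-l)*P + l*Z : ℝ) : EReal) := by
      rw [← hm] at hcvx
      exact_mod_cast hcvx
    have hprox := hp m
    rw [hP] at hprox
    have hchain := hprox.trans (add_le_add_left hcvx' _)
    rw [← EReal.coe_add, ← EReal.coe_add, EReal.coe_le_coe_iff] at hchain
    have hmv : m - v = (p - v) + l • (z - p) := by rw [hm]; module
    have hnorm : ‖m - v‖^2 = ‖p - v‖^2 + 2*l*⟪p - v, z - p⟫ + l^2*‖z - p‖^2 := by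
      rw [hmv, ← real_inner_self_eq_norm_sq, ← real_inner_self_eq_norm_sq,
        ← real_inner_self_eq_norm_sq]
      simp only [inner_add_add_self, inner_smul_left, inner_smul_right, conj_trivial]
      rw [real_inner_comm (z - p) (p - v)]
      ring
    rw [hnorm] at hchain
    have h2t : (0:ℝ) < 2*t := by linarith
    have he : (‖p - v‖ ^ 2 + 2 * l * ⟪p - v, z - p⟫ + l ^ 2 * ‖z - p‖ ^ 2) / (2 * t)
        = ‖p - v‖ ^ 2 / (2 * t) + l * (⟪p - v, z - p⟫ / t) + l * (l * (‖z - p‖ ^ 2 / (2 * t))) := by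
      field_simp
    rw [he] at hchain
    have hgoal : l * (P - Z) ≤ l * (⟪p - v, z - p⟫ / t + l * (‖z - p‖ ^ 2 / (2 * t))) := by
      nlinarith [hchain]
    exact le_of_mul_le_mul_left hgoal hl0
  have hfin := fista_le_of_forall_eps (P - Z) (⟪p - v, z - p⟫ / t) (‖z - p‖^2 / (2*t))
    (by positivity) hkey
  have hip : ⟪p - v, z - p⟫ = ⟪z - p, p - v⟫ := real_inner_comm _ _
  have h2t : (0:ℝ) < 2*t := by linarith
  rw [hexp]
  rw [hip] at hfin
  rw [add_div, add_div]
  have h22 : 2 * ⟪z - p, p - v⟫ / (2 * t) = ⟪z - p, p - v⟫ / t :=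
    mul_div_mul_left _ _ (two_ne_zero)
  rw [h22]
  linarith

set_option linter.unusedSectionVars false in
private lemma fista_key_step (φ : E → ℝ) (φ' : E → E)
    (hφd : ∀ v, HasGradientAt φ (φ' v) v) (hφc : ConvexOn ℝ Set.univ φ)
    (L : ℝ) (hL : 0 < L) (hlip : ∀ u v : E, ‖φ' u - φ' v‖ ≤ L * ‖u - v‖)
    (ψ : E → EReal) (hψc : EConvex ψ) (hbot : ∀ w, ψ w ≠ ⊥)
    (f : E → EReal) (hf : ∀ v, f v = ((φ v : ℝ) : EReal) + ψ v)
    (yk xp : E) (hpp : IsProxPt ψ (1/L) (yk - (1/L) • φ' yk) xp) (hxt : ψ xp ≠ ⊤)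
    (z : E) :
    f xp + ((L/2 * ‖z - xp‖^2 : ℝ) : EReal) ≤ f z + ((L/2 * ‖z - yk‖^2 : ℝ) : EReal) := by
  set g := φ' yk with hg
  set v := yk - (1/L) • g with hv
  by_cases hz : ψ z = ⊤
  · rw [hf z, hz, EReal.add_top_of_ne_bot (EReal.coe_ne_bot _),
      EReal.top_add_of_ne_bot (EReal.coe_ne_bot _)]
    exact le_top
  obtain ⟨P, hP⟩ : ∃ P : ℝ, ψ xp = (P : ℝ) := ⟨(ψ xp).toReal, (EReal.coe_toReal hxt (hbot xp)).symm⟩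
  obtain ⟨Z, hZ⟩ : ∃ Z : ℝ, ψ z = (Z : ℝ) := ⟨(ψ z).toReal, (EReal.coe_toReal hz (hbot z)).symm⟩
  have hps := fista_prox_strong ψ hψc (1/L) (by positivity) v xp hpp hxt hbot z
  rw [hP, hZ, ← EReal.coe_add, ← EReal.coe_add, EReal.coe_le_coe_iff] at hps
  have hdiv : ∀ c : ℝ, c/(2*(1/L)) = L/2*c := by
    intro c; field_simp
  rw [hdiv, hdiv, hdiv] at hps
  have hexp : ∀ w : E, ‖w - v‖^2 = ‖w - yk‖^2 + (2/L)*⟪g, w - yk⟫ + ‖g‖^2/L^2 := by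
    intro w
    have hwv : w - v = (w - yk) + (1/L) • g := by rw [hv]; module
    rw [hwv, ← real_inner_self_eq_norm_sq, ← real_inner_self_eq_norm_sq,
      ← real_inner_self_eq_norm_sq]
    simp only [inner_add_add_self, inner_smul_left, inner_smul_right, conj_trivial]
    rw [real_inner_comm (w - yk) g]
    field_simp
    ring
  have hm1 : L/2*‖xp - v‖^2 = L/2*‖xp - yk‖^2 + ⟪g, xp - yk⟫ + ‖g‖^2/(2*L) := by
    rw [hexp xp]; field_simp
  have hm2 : L/2*‖z - v‖^2 = L/2*‖z - yk‖^2 + ⟪g, z - yk⟫ + ‖g‖^2/(2*L) := by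
    rw [hexp z]; field_simp
  rw [hm1, hm2] at hps
  have hdesc := fista_descent_lemma φ φ' hφd L hL hlip yk xp
  have hconv := fista_grad_convex_le φ φ' hφd hφc yk z
  rw [hf xp, hf z, hP, hZ, ← EReal.coe_add, ← EReal.coe_add, ← EReal.coe_add, ← EReal.coe_add,
    EReal.coe_le_coe_iff]
  rw [← hg] at hdesc hconv
  linarith

private lemma fista_theta_bound (θ : ℕ → ℝ) (hθ0 : θ 0 = 1)
    (hθmem : ∀ k, θ (k+1) ∈ Set.Ioc (0:ℝ) 1)
    (hθrec : ∀ k, (θ (k+1))^2 = (θ k)^2 * (1 - θ (k+1))) :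
    ∀ k : ℕ, θ k * ((k : ℝ) + 2) ≤ 2 := by
  intro k
  induction k with
  | zero => norm_num [hθ0]
  | succ n ih =>
    have hs : 0 < θ n := by
      cases n with
      | zero => rw [hθ0]; norm_num
      | succ m => exact (hθmem m).1
    obtain ⟨ht0, ht1⟩ := hθmem n
    have hrec := hθrec n
    by_contra hcon
    push_neg at hcon
    have hn : (0:ℝ) ≤ (n:ℝ) := Nat.cast_nonneg n
    push_cast at hcon ih ⊢
    have h1 : 2 < θ (n+1) * ((n:ℝ) + 3) := by linarith [hcon]
    have h2 : 4 < θ (n+1)^2 * ((n:ℝ)+3)^2 := by nlinarith [ht0, h1]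
    have h3 : θ n^2 * ((n:ℝ)+2)^2 ≤ 4 := by
      nlinarith [ih, mul_nonneg hs.le (by linarith : (0:ℝ) ≤ (n:ℝ)+2),
        mul_nonneg (mul_nonneg hs.le (by linarith : (0:ℝ) ≤ (n:ℝ)+2))
          (by linarith [ih] : (0:ℝ) ≤ 2 - θ n * ((n:ℝ)+2))]
    have h4 : (1 - θ (n+1)) * ((n:ℝ)+3) < (n:ℝ)+1 := by nlinarith [h1]
    have h5 : 4 < θ n^2 * (1 - θ (n+1)) * ((n:ℝ)+3)^2 := by nlinarith [h2, hrec]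
    have h6 : θ n^2 * ((n:ℝ)+1) * ((n:ℝ)+3) ≤ 4 := by nlinarith [h3, sq_nonneg (θ n)]
    nlinarith [h5, h6, sq_nonneg (θ n), mul_pos hs hs, h4]

end FistaAux

set_option maxHeartbeats 1000000 in
/-- `O(1/k²)` convergence rate of the accelerated proximal gradient (FISTA) method. -/
theorem accel_prox_grad_rate (φ : E → ℝ) (φ' : E → E)
    (hφd : ∀ v, HasGradientAt φ (φ' v) v) (hφc : ConvexOn ℝ Set.univ φ)
    (L : ℝ) (hL : 0 < L) (hlip : ∀ u v : E, ‖φ' u - φ' v‖ ≤ L * ‖u - v‖)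
    (ψ : E → EReal) (hψc : EConvex ψ) (hψp : ProperFn ψ) (hψlsc : LowerSemicontinuous ψ)
    (f : E → EReal) (hf : ∀ v, f v = ((φ v : ℝ) : EReal) + ψ v)
    (fbar : ℝ) (Xbar : Set E) (hXbar : Xbar = {v : E | f v = ((fbar : ℝ) : EReal)})
    (hne : Xbar.Nonempty) (hmin : ∀ v : E, ((fbar : ℝ) : EReal) ≤ f v)
    (θ : ℕ → ℝ) (hθ0 : θ 0 = 1) (hθmem : ∀ k, θ (k+1) ∈ Set.Ioc (0:ℝ) 1)
    (hθrec : ∀ k, (θ (k+1))^2 = (θ k)^2 * (1 - θ (k+1)))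
    (x y : ℕ → E) (hy0 : y 0 = x 0)
    (hstep : ∀ k : ℕ, IsProxPt ψ (1/L) (y k - (1/L) • φ' (y k)) (x (k+1)))
    (hmom : ∀ k : ℕ,
      y (k+1) = x (k+1) + ((θ (k+1) * (1 - θ k)) / θ k) • (x (k+1) - x k)) :
    ∀ k : ℕ, 1 ≤ k →
      f (x k) ≤
        ((fbar + 2 * L * (Metric.infDist (x 0) Xbar)^2 / ((k:ℝ) + 1)^2 : ℝ) : EReal) := by
  have hbot := hψp.2
  have hθpos : ∀ j, 0 < θ j := by
    intro j
    cases j with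
    | zero => rw [hθ0]; norm_num
    | succ m => exact (hθmem m).1
  -- closedness of Xbar and the projection point xs
  have hφcont : Continuous φ := Differentiable.continuous (fun v => (hφd v).differentiableAt)
  have hflsc : LowerSemicontinuous f := by
    have hfeq : f = fun v => ((φ v : ℝ) : EReal) + ψ v := funext hf
    rw [hfeq]
    exact LowerSemicontinuous.add'
      ((continuous_coe_real_ereal.comp hφcont).lowerSemicontinuous) hψlsc
      (fun w => EReal.continuousAt_add (Or.inl (EReal.coe_ne_top _))
        (Or.inl (EReal.coe_ne_bot _)))
  have hXeq : Xbar = f ⁻¹' (Set.Iic ((fbar : ℝ) : EReal)) := by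
    rw [hXbar]; ext v
    simp only [Set.mem_setOf_eq, Set.mem_preimage, Set.mem_Iic]
    exact ⟨fun h => le_of_eq h, fun h => le_antisymm h (hmin v)⟩
  have hclosed : IsClosed Xbar := by
    rw [hXeq]
    exact lowerSemicontinuous_iff_isClosed_preimage.1 hflsc _
  obtain ⟨xs, hxsX, hxsd⟩ := hclosed.exists_infDist_eq_dist hne (x 0)
  have hfxs : f xs = ((fbar : ℝ) : EReal) := by rw [hXbar] at hxsX; exact hxsX
  have hψxs_ne_top : ψ xs ≠ ⊤ := by
    intro h
    rw [hf xs, h, EReal.add_top_of_ne_bot (EReal.coe_ne_bot _)] at hfxs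
    exact (EReal.coe_ne_top fbar) hfxs.symm
  obtain ⟨Q, hQ⟩ : ∃ Q : ℝ, ψ xs = (Q : ℝ) :=
    ⟨(ψ xs).toReal, (EReal.coe_toReal hψxs_ne_top (hbot xs)).symm⟩
  have hQval : φ xs + Q = fbar := by
    rw [hf xs, hQ, ← EReal.coe_add, EReal.coe_eq_coe_iff] at hfxs
    exact hfxs
  -- the iterates have finite ψ-value
  obtain ⟨w0, hw0⟩ := hψp.1
  have hfin : ∀ j : ℕ, ψ (x (j+1)) ≠ ⊤ := by
    intro j h
    have hst := hstep j w0
    rw [h, EReal.top_add_of_ne_bot (EReal.coe_ne_bot _)] at hst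
    rw [top_le_iff] at hst
    exact (EReal.add_lt_top hw0 (EReal.coe_ne_top _)).ne hst
  -- real values of f along the iterates
  set F : ℕ → ℝ := fun j => φ (x j) + (ψ (x j)).toReal with hF
  have hFcoe : ∀ j : ℕ, f (x (j+1)) = ((F (j+1) : ℝ) : EReal) := by
    intro j
    rw [hf, hF, EReal.coe_add]
    congr 1
    exact (EReal.coe_toReal (hfin j) (hbot _)).symm
  have hkey : ∀ (j : ℕ) (z : E),
      f (x (j+1)) + ((L/2 * ‖z - x (j+1)‖^2 : ℝ) : EReal)
        ≤ f z + ((L/2 * ‖z - y j‖^2 : ℝ) : EReal) :=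
    fun j z => fista_key_step φ φ' hφd hφc L hL hlip ψ hψc hbot f hf
      (y j) (x (j+1)) (hstep j) (hfin j) z
  set U : ℕ → E := fun j => x j + (θ j)⁻¹ • (x (j+1) - x j) with hU
  have claim : ∀ j : ℕ,
      (F (j+1) - fbar) + L/2 * ‖U j - xs‖^2 * (θ j)^2 ≤ L/2 * ‖x 0 - xs‖^2 * (θ j)^2 := by
    intro j
    induction j with
    | zero =>
      have h0 := hkey 0 xs
      rw [hFcoe 0, hfxs, hy0, ← EReal.coe_add, ← EReal.coe_add, EReal.coe_le_coe_iff] at h0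
      have hU0 : U 0 - xs = -(xs - x 1) := by
        rw [hU]; simp only [hθ0]
        module
      have hx0 : x 0 - xs = -(xs - x 0) := by abel
      rw [hθ0, hU0, hx0, norm_neg, norm_neg]
      nlinarith [h0]
    | succ n ih =>
      set t := θ (n+1) with hts
      set s := θ n with hss
      have hs0 : 0 < s := hθpos n
      have ht0 : 0 < t := hθpos (n+1)
      have ht1 : t ≤ 1 := (hθmem n).2
      set z : E := t • xs + (1-t) • x (n+1) with hz
      have h0 := hkey (n+1) z
      -- bound f z
      have hψxn : ψ (x (n+1)) = (((ψ (x (n+1))).toReal : ℝ) : EReal) :=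
        (EReal.coe_toReal (hfin n) (hbot _)).symm
      have hψz : ψ z ≤ ((t*Q + (1-t)*(ψ (x (n+1))).toReal : ℝ) : EReal) := by
        have hc := hψc xs (x (n+1)) t (1-t) ht0.le (by linarith) (by ring)
        rw [← hz] at hc
        rw [hQ, hψxn] at hc
        exact hc.trans (le_of_eq (by norm_cast))
      have hφz : φ z ≤ t * φ xs + (1-t) * φ (x (n+1)) := by
        have := hφc.2 (Set.mem_univ xs) (Set.mem_univ (x (n+1))) ht0.le
          (by linarith : (0:ℝ) ≤ 1 - t) (by ring)
        simpa [hz] using this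
      have hFn : F (n+1) = φ (x (n+1)) + (ψ (x (n+1))).toReal := rfl
      have h6 : φ z + (t*Q + (1-t)*(ψ (x (n+1))).toReal) ≤ t*fbar + (1-t)*F (n+1) := by
        rw [hFn]
        nlinarith [hφz, hQval]
      have hfz : f z ≤ ((t*fbar + (1-t)*F (n+1) : ℝ) : EReal) := by
        rw [hf z]
        calc ((φ z : ℝ) : EReal) + ψ z
            ≤ ((φ z : ℝ) : EReal) + ((t*Q + (1-t)*(ψ (x (n+1))).toReal : ℝ) : EReal) :=
              add_le_add_right hψz _
          _ = ((φ z + (t*Q + (1-t)*(ψ (x (n+1))).toReal) : ℝ) : EReal) := by norm_cast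
          _ ≤ ((t*fbar + (1-t)*F (n+1) : ℝ) : EReal) := by exact_mod_cast h6
      have hchain := h0.trans (add_le_add_left hfz _)
      rw [hFcoe (n+1), ← EReal.coe_add, ← EReal.coe_add, EReal.coe_le_coe_iff] at hchain
      -- vector identities
      have hv1 : z - x (n+2) = -(t • (U (n+1) - xs)) := by
        rw [hz, hU]
        simp only
        match_scalars <;> (try simp only [← hts, ← hss]) <;> field_simp <;> ring
      have hv2 : z - y (n+1) = -(t • (U n - xs)) := by
        rw [hz, hU, hmom n]
        simp only
        match_scalars <;> (try simp only [← hts, ← hss]) <;> field_simp <;> ring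
      have hn1 : ‖z - x (n+2)‖^2 = t^2 * ‖U (n+1) - xs‖^2 := by
        rw [hv1, norm_neg, norm_smul, Real.norm_eq_abs, mul_pow, sq_abs]
      have hn2 : ‖z - y (n+1)‖^2 = t^2 * ‖U n - xs‖^2 := by
        rw [hv2, norm_neg, norm_smul, Real.norm_eq_abs, mul_pow, sq_abs]
      rw [hn1, hn2] at hchain
      have hrec : t^2 = s^2 * (1-t) := hθrec n
      have ih2 : (1-t) * ((F (n+1) - fbar) + L/2 * ‖U n - xs‖^2 * s^2)
          ≤ (1-t) * (L/2 * ‖x 0 - xs‖^2 * s^2) :=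
        mul_le_mul_of_nonneg_left ih (by linarith)
      have e : (1-t)*s^2 = t^2 := by rw [hrec]; ring
      have ih3 : (1-t)*(F (n+1) - fbar) + L/2*‖U n - xs‖^2*((1-t)*s^2)
          ≤ L/2*‖x 0 - xs‖^2*((1-t)*s^2) := by linarith [ih2]
      rw [e] at ih3
      have ht' : t*fbar + (1-t)*F (n+1) = fbar + (1-t)*(F (n+1) - fbar) := by ring
      rw [ht'] at hchain
      linarith [hchain, ih3]
  -- conclusion
  intro k hk
  obtain ⟨m, rfl⟩ : ∃ m : ℕ, k = m + 1 := ⟨k - 1, (Nat.succ_pred_eq_of_pos hk).symm⟩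
  have hcl := claim m
  have hd : Metric.infDist (x 0) Xbar = ‖x 0 - xs‖ := by rw [hxsd, dist_eq_norm]
  have hθb := fista_theta_bound θ hθ0 hθmem hθrec m
  have hθm := hθpos m
  rw [hFcoe m]
  rw [hd]
  rw [EReal.coe_le_coe_iff]
  have hkR : ((m+1 : ℕ) : ℝ) + 1 = (m:ℝ) + 2 := by push_cast; ring
  rw [hkR]
  have hm2 : (0:ℝ) < ((m:ℝ)+2)^2 := by positivity
  have h1 : (θ m)^2 * ((m:ℝ)+2)^2 ≤ 4 := by
    nlinarith [hθb, mul_nonneg hθm.le (show (0:ℝ) ≤ (m:ℝ)+2 by positivity),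
      mul_nonneg (mul_nonneg hθm.le (show (0:ℝ) ≤ (m:ℝ)+2 by positivity))
        (by linarith [hθb] : (0:ℝ) ≤ 2 - θ m * ((m:ℝ)+2))]
  have h2 : L/2 * ‖x 0 - xs‖^2 * (θ m)^2 ≤ 2*L*‖x 0 - xs‖^2 / ((m:ℝ)+2)^2 := by
    rw [le_div_iff₀ hm2]
    nlinarith [h1, sq_nonneg ‖x 0 - xs‖, hL.le, mul_nonneg (sq_nonneg ‖x 0 - xs‖) hL.le]
  have h3 : (0:ℝ) ≤ L/2 * ‖U m - xs‖^2 * (θ m)^2 := by positivity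
  linarith [hcl, h2, h3]
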